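/- For all n ≥ r ≥ 2, for every r-coloring of the edges of the complete graph K_n, there is a monochromatic component of order at least n/(r−1). -/

import Mathlib

open Finset

/-- Two vertices are connected by the edge set `E` (of a hypergraph)
if they are joined by a walk of edges from `E`. -/
def connBy {V : Type*} (E : Set (Finset V)) : V → V → Prop :=
  Relation.ReflTransGen (fun u w => ∃ e ∈ E, u ∈ e ∧ w ∈ e)

/-- The connected component of `v` in the hypergraph with edge set `E`. -/
def compOf {V : Type*} (E : Set (Finset V)) (v : V) : Set V :=
  {u | connBy E u v}
private lemma connBy_mono {V : Type*} {E E' : Set (Finset V)} (h : E ⊆ E') {u v : V}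
    (huv : connBy E u v) : connBy E' u v := by
  refine Relation.ReflTransGen.mono ?_ _ _ huv
  rintro a b ⟨e, he, ha, hb⟩
  exact ⟨e, h he, ha, hb⟩

private lemma connBy_symm {V : Type*} {E : Set (Finset V)} {u v : V}
    (h : connBy E u v) : connBy E v u := by
  induction h with
  | refl => exact Relation.ReflTransGen.refl
  | tail _ hbc ih =>
      obtain ⟨e, he, hb, hc⟩ := hbc
      exact Relation.ReflTransGen.head ⟨e, he, hc, hb⟩ ih

private lemma connBy_trans {V : Type*} {E : Set (Finset V)} {u v w : V}
    (h : connBy E u v) (h' : connBy E v w) : connBy E u w :=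
  Relation.ReflTransGen.trans h h'

theorem stmt12 (n r : ℕ) (hr : 2 ≤ r) (hn : r ≤ n) (χ : Finset (Fin n) → Fin r) :
    ∃ (c : Fin r) (v : Fin n),
      (n : ℚ) / ((r : ℚ) - 1) ≤ (compOf {e | e.card = 2 ∧ χ e = c} v).ncard := by
  classical
  by_contra hcon
  push_neg at hcon
  have hn0 : 0 < n := by omega
  have hr1 : 1 ≤ r - 1 := by omega
  -- ncard to filter card
  have hncard : ∀ (S : Set (Fin n)), S.ncard = (univ.filter (· ∈ S)).card := by
    intro S
    rw [← Set.ncard_coe_finset]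
    congr 1
    ext x; simp
  set Ec : Fin r → Set (Finset (Fin n)) := fun c => {e | e.card = 2 ∧ χ e = c} with hEc
  -- smallness in ℕ
  have hsm : ∀ (c : Fin r) (v : Fin n),
      (compOf (Ec c) v).ncard * (r - 1) < n := by
    intro c v
    have h := hcon c v
    have hpos : (0:ℚ) < (r:ℚ) - 1 := by
      have h2 : (2:ℚ) ≤ (r:ℚ) := by exact_mod_cast hr
      linarith
    rw [lt_div_iff₀ hpos] at h
    rw [show ((r:ℚ) - 1) = ((r - 1 : ℕ) : ℚ) from by
          push_cast [Nat.cast_sub (show 1 ≤ r by omega)]; ring,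
        ← Nat.cast_mul, Nat.cast_lt] at h
    exact h
  -- setup
  set c0 : Fin r := ⟨0, by omega⟩ with hc0
  set v0 : Fin n := ⟨0, hn0⟩ with hv0
  set A : Set (Fin n) := compOf (Ec c0) v0 with hA
  set Af : Finset (Fin n) := univ.filter (· ∈ A) with hAf
  set Bf : Finset (Fin n) := univ.filter (· ∉ A) with hBf
  have hmemAf : ∀ x, x ∈ Af ↔ x ∈ A := by intro x; rw [hAf]; simp
  have hmemBf : ∀ x, x ∈ Bf ↔ x ∉ A := by intro x; rw [hBf]; simp
  have hab : Af.card + Bf.card = n := by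
    rw [hAf, hBf]
    rw [Finset.card_filter_add_card_filter_not]
    simp
  have hv0A : v0 ∈ A := Relation.ReflTransGen.refl
  have ha1 : 1 ≤ Af.card := card_pos.mpr ⟨v0, (hmemAf v0).mpr hv0A⟩
  have haSmall : Af.card * (r-1) < n := by
    have h1 := hsm c0 v0
    rw [hncard] at h1
    rw [hAf]
    exact h1
  have hAle : Af.card ≤ Af.card * (r-1) := by
    calc Af.card = Af.card * 1 := (mul_one _).symm
    _ ≤ Af.card * (r-1) := Nat.mul_le_mul_left _ hr1
  have hb1 : 1 ≤ Bf.card := by omega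
  -- cross edges avoid c0
  have hcross : ∀ x ∈ Af, ∀ y ∈ Bf, x ≠ y ∧ χ {x, y} ≠ c0 := by
    intro x hx y hy
    have hxA : x ∈ A := (hmemAf x).mp hx
    have hyA : y ∉ A := (hmemBf y).mp hy
    have hxy : x ≠ y := by rintro rfl; exact hyA hxA
    refine ⟨hxy, fun hchi => hyA ?_⟩
    have hstep : connBy (Ec c0) y x :=
      Relation.ReflTransGen.single ⟨{x, y}, ⟨Finset.card_pair hxy, hchi⟩, by simp, by simp⟩
    exact connBy_trans hstep hxA
  -- bipartite edge sets and components
  set E' : Fin r → Set (Finset (Fin n)) :=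
    fun c => {e | ∃ x ∈ Af, ∃ y ∈ Bf, e = {x, y} ∧ χ e = c} with hE'
  have hE'sub : ∀ c, E' c ⊆ Ec c := by
    intro c e he
    obtain ⟨x, hx, y, hy, rfl, hchi⟩ := he
    exact ⟨Finset.card_pair (hcross x hx y hy).1, hchi⟩
  set comp' : Fin r → Fin n → Finset (Fin n) :=
    fun c v => univ.filter (fun u => connBy (E' c) u v) with hcomp'
  have hmem_comp' : ∀ c v u, u ∈ comp' c v ↔ connBy (E' c) u v := by
    intro c v u; rw [hcomp']; simp
  have hself : ∀ c v, v ∈ comp' c v :=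
    fun c v => (hmem_comp' c v v).mpr Relation.ReflTransGen.refl
  have hcompeq : ∀ c u v, u ∈ comp' c v → comp' c u = comp' c v := by
    intro c u v hu
    have huv := (hmem_comp' c v u).mp hu
    ext w
    rw [hmem_comp', hmem_comp']
    exact ⟨fun h => connBy_trans h huv, fun h => connBy_trans h (connBy_symm huv)⟩
  have hsm' : ∀ c v, (comp' c v).card * (r - 1) < n := by
    intro c v
    have hsub : comp' c v ⊆ univ.filter (· ∈ compOf (Ec c) v) := by
      intro u hu
      simp only [mem_filter, mem_univ, true_and]
      exact connBy_mono (hE'sub c) ((hmem_comp' c v u).mp hu)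
    have h1 : (comp' c v).card ≤ (compOf (Ec c) v).ncard := by
      rw [hncard]; exact card_le_card hsub
    have h3 := hsm c v
    have h2 : (comp' c v).card * (r-1) ≤ (compOf (Ec c) v).ncard * (r-1) :=
      Nat.mul_le_mul_right _ h1
    omega
  set CC : Finset (Fin r) := univ.erase c0 with hCC
  have hCCcard : CC.card = r - 1 := by
    rw [hCC, card_erase_of_mem (mem_univ _), card_univ]; simp
  have hdisjAB : ∀ (D : Finset (Fin n)), Disjoint (Af ∩ D) (Bf ∩ D) := by
    intro D
    refine Finset.disjoint_left.mpr ?_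
    intro u hu hu2
    exact (hmemBf u).mp (mem_inter.mp hu2).1 ((hmemAf u).mp (mem_inter.mp hu).1)
  have hxysum : ∀ c v, (Af ∩ comp' c v).card + (Bf ∩ comp' c v).card ≤ (comp' c v).card := by
    intro c v
    rw [← card_union_of_disjoint (hdisjAB _)]
    apply card_le_card
    intro u hu
    rcases mem_union.mp hu with h | h
    exacts [(mem_inter.mp h).2, (mem_inter.mp h).2]
  -- fan lemmas
  have fanB : ∀ x ∈ Af, Bf.card ≤ ∑ c ∈ CC, (Bf ∩ comp' c x).card := by
    intro x hx
    have hsub : Bf ⊆ CC.biUnion (fun c => Bf ∩ comp' c x) := by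
      intro y hy
      obtain ⟨hxy, hne⟩ := hcross x hx y hy
      refine mem_biUnion.mpr ⟨χ {x, y}, by rw [hCC]; exact mem_erase.mpr ⟨hne, mem_univ _⟩,
        mem_inter.mpr ⟨hy, ?_⟩⟩
      exact (hmem_comp' _ x y).mpr (Relation.ReflTransGen.single
        ⟨{x, y}, ⟨x, hx, y, hy, rfl, rfl⟩, by simp, by simp⟩)
    calc Bf.card ≤ (CC.biUnion (fun c => Bf ∩ comp' c x)).card := card_le_card hsub
    _ ≤ ∑ c ∈ CC, (Bf ∩ comp' c x).card := card_biUnion_le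
  have fanA : ∀ y ∈ Bf, Af.card ≤ ∑ c ∈ CC, (Af ∩ comp' c y).card := by
    intro y hy
    have hsub : Af ⊆ CC.biUnion (fun c => Af ∩ comp' c y) := by
      intro x hx
      obtain ⟨hxy, hne⟩ := hcross x hx y hy
      refine mem_biUnion.mpr ⟨χ {x, y}, by rw [hCC]; exact mem_erase.mpr ⟨hne, mem_univ _⟩,
        mem_inter.mpr ⟨hx, ?_⟩⟩
      exact (hmem_comp' _ y x).mpr (Relation.ReflTransGen.single
        ⟨{x, y}, ⟨x, hx, y, hy, rfl, rfl⟩, by simp, by simp⟩)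
    calc Af.card ≤ (CC.biUnion (fun c => Af ∩ comp' c y)).card := card_le_card hsub
    _ ≤ ∑ c ∈ CC, (Af ∩ comp' c y).card := card_biUnion_le
  -- summed smallness
  have hsumsmall : ∀ v : Fin n,
      (∑ c ∈ CC, ((Af ∩ comp' c v).card + (Bf ∩ comp' c v).card)) ≤ n - 1 := by
    intro v
    have h1 : (∑ c ∈ CC, ((Af ∩ comp' c v).card + (Bf ∩ comp' c v).card)) * (r-1)
        ≤ (n-1) * (r-1) := by
      rw [sum_mul]
      calc ∑ c ∈ CC, ((Af ∩ comp' c v).card + (Bf ∩ comp' c v).card) * (r-1)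
          ≤ ∑ _c ∈ CC, (n-1) := by
            refine sum_le_sum fun c _ => ?_
            have h2 := Nat.mul_le_mul_right (r-1) (hxysum c v)
            have h3 := hsm' c v
            omega
        _ = (n-1) * (r-1) := by rw [sum_const, smul_eq_mul, hCCcard, mul_comm]
    exact Nat.le_of_mul_le_mul_right h1 (by omega : 0 < r - 1)
  have fan2A : ∀ x ∈ Af, (∑ c ∈ CC, (Af ∩ comp' c x).card) ≤ Af.card - 1 := by
    intro x hx
    have h1 := hsumsmall x
    rw [sum_add_distrib] at h1
    have h2 := fanB x hx
    omega
  have fan2B : ∀ y ∈ Bf, (∑ c ∈ CC, (Bf ∩ comp' c y).card) ≤ Bf.card - 1 := by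
    intro y hy
    have h1 := hsumsmall y
    rw [sum_add_distrib] at h1
    have h2 := fanA y hy
    omega
  -- aggregated sums
  have hSAB : Af.card * Bf.card ≤ ∑ c ∈ CC, ∑ y ∈ Bf, (Af ∩ comp' c y).card := by
    rw [sum_comm]
    calc Af.card * Bf.card = ∑ _y ∈ Bf, Af.card := by rw [sum_const, smul_eq_mul, mul_comm]
    _ ≤ ∑ y ∈ Bf, ∑ c ∈ CC, (Af ∩ comp' c y).card := sum_le_sum fanA
  have hSAA : (∑ c ∈ CC, ∑ x ∈ Af, (Af ∩ comp' c x).card) ≤ Af.card * (Af.card - 1) := by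
    rw [sum_comm]
    calc ∑ x ∈ Af, ∑ c ∈ CC, (Af ∩ comp' c x).card ≤ ∑ _x ∈ Af, (Af.card - 1) :=
        sum_le_sum fan2A
    _ = Af.card * (Af.card - 1) := by rw [sum_const, smul_eq_mul]
  have hSBB : (∑ c ∈ CC, ∑ y ∈ Bf, (Bf ∩ comp' c y).card) ≤ Bf.card * (Bf.card - 1) := by
    rw [sum_comm]
    calc ∑ y ∈ Bf, ∑ c ∈ CC, (Bf ∩ comp' c y).card ≤ ∑ _y ∈ Bf, (Bf.card - 1) :=
        sum_le_sum fan2B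
    _ = Bf.card * (Bf.card - 1) := by rw [sum_const, smul_eq_mul]
  -- fiberwise identity over components
  have hfib : ∀ (c : Fin r) (S : Finset (Fin n)) (F : Finset (Fin n) → ℕ),
      ∑ w ∈ S, F (comp' c w) = ∑ D ∈ univ.image (comp' c), (S ∩ D).card * F D := by
    intro c S F
    rw [← Finset.sum_fiberwise_of_maps_to' (g := comp' c) (t := univ.image (comp' c))
        (fun w _ => mem_image_of_mem _ (mem_univ w)) F]
    refine sum_congr rfl fun D hD => ?_
    have hDiff : ∀ w, comp' c w = D ↔ w ∈ D := by
      intro w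
      constructor
      · rintro rfl; exact hself c w
      · intro hw
        obtain ⟨v, -, rfl⟩ := mem_image.mp hD
        exact hcompeq c w v hw
    have hfilter : S.filter (fun w => comp' c w = D) = S ∩ D := by
      ext w
      simp only [mem_filter, mem_inter]
      exact and_congr_right fun _ => hDiff w
    rw [sum_const, hfilter, smul_eq_mul]
  -- rewrite the three aggregated sums via components
  have eAB : (∑ c ∈ CC, ∑ y ∈ Bf, (Af ∩ comp' c y).card)
      = ∑ c ∈ CC, ∑ D ∈ univ.image (comp' c), (Bf ∩ D).card * (Af ∩ D).card :=
    sum_congr rfl fun c _ => hfib c Bf (fun D => (Af ∩ D).card)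
  have eAA : (∑ c ∈ CC, ∑ x ∈ Af, (Af ∩ comp' c x).card)
      = ∑ c ∈ CC, ∑ D ∈ univ.image (comp' c), (Af ∩ D).card * (Af ∩ D).card :=
    sum_congr rfl fun c _ => hfib c Af (fun D => (Af ∩ D).card)
  have eBB : (∑ c ∈ CC, ∑ y ∈ Bf, (Bf ∩ comp' c y).card)
      = ∑ c ∈ CC, ∑ D ∈ univ.image (comp' c), (Bf ∩ D).card * (Bf ∩ D).card :=
    sum_congr rfl fun c _ => hfib c Bf (fun D => (Bf ∩ D).card)
  -- Cauchy-Schwarz over a sigma index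
  have hCS := Finset.sum_mul_sq_le_sq_mul_sq (R := ℕ)
      (CC.sigma (fun c => univ.image (comp' c)))
      (fun p => (Bf ∩ p.2).card) (fun p => (Af ∩ p.2).card)
  simp only [Finset.sum_sigma] at hCS
  -- assemble the contradiction
  have key : (Af.card * Bf.card)^2
      ≤ (Bf.card * (Bf.card - 1)) * (Af.card * (Af.card - 1)) := by
    calc (Af.card * Bf.card)^2
        ≤ (∑ c ∈ CC, ∑ y ∈ Bf, (Af ∩ comp' c y).card)^2 := Nat.pow_le_pow_left hSAB 2
    _ = (∑ c ∈ CC, ∑ D ∈ univ.image (comp' c), (Bf ∩ D).card * (Af ∩ D).card)^2 := by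
        rw [eAB]
    _ ≤ (∑ c ∈ CC, ∑ D ∈ univ.image (comp' c), (Bf ∩ D).card ^ 2)
        * (∑ c ∈ CC, ∑ D ∈ univ.image (comp' c), (Af ∩ D).card ^ 2) := hCS
    _ = (∑ c ∈ CC, ∑ y ∈ Bf, (Bf ∩ comp' c y).card)
        * (∑ c ∈ CC, ∑ x ∈ Af, (Af ∩ comp' c x).card) := by
        rw [eAA, eBB]
        simp only [pow_two]
    _ ≤ (Bf.card * (Bf.card - 1)) * (Af.card * (Af.card - 1)) :=
        Nat.mul_le_mul hSBB hSAA
  have hub : (Bf.card * (Bf.card - 1)) * (Af.card * (Af.card - 1))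
      < (Af.card * Bf.card)^2 := by
    obtain ⟨p, hp⟩ : ∃ p, Af.card = p + 1 := ⟨Af.card - 1, by omega⟩
    obtain ⟨q, hq⟩ : ∃ q, Bf.card = q + 1 := ⟨Bf.card - 1, by omega⟩
    rw [hp, hq]
    simp only [Nat.add_sub_cancel]
    nlinarith [Nat.zero_le p, Nat.zero_le q, Nat.zero_le (p*q)]
  exact absurd key (not_le.mpr hub)
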